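/- arXiv:2001.05571 — 5 statements merged into one kernel-verified Lean document; each statement's English description precedes it below -/
import Mathlib

section
/- Let t̂, f̂, σ_t, σ_f be real numbers with 0 < σ_t < t̂ and 0 < σ_f < f̂. Define Δ = sup_{η ∈ (0,1)} (UB(η) − LB(η)), where UB(η) and LB(η) are the supremum and infimum of Prec(η, t, f) over t ∈ (t̂ − σ_t, t̂ + σ_t) and f ∈ (f̂ − σ_f, f̂ + σ_f). Then Δ ≤ max{σ_t/t̂, σ_f/f̂}. -/
open Set

/-- Precision as a function of positive class prevalence `η`, TPR `t` and FPR `f`. -/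
noncomputable def Prec (η t f : ℝ) : ℝ := η * t / (η * t + (1 - η) * f)

/-- Upper bound `UB(η)`: supremum of precision over the confidence intervals. -/
noncomputable def UB (th σt fh σf η : ℝ) : ℝ :=
  sSup {p : ℝ | ∃ t ∈ Ioo (th - σt) (th + σt), ∃ f ∈ Ioo (fh - σf) (fh + σf), p = Prec η t f}

/-- Lower bound `LB(η)`: infimum of precision over the confidence intervals. -/
noncomputable def LB (th σt fh σf η : ℝ) : ℝ :=
  sInf {p : ℝ | ∃ t ∈ Ioo (th - σt) (th + σt), ∃ f ∈ Ioo (fh - σf) (fh + σf), p = Prec η t f}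

/-- The maximal uncertainty `Δ = sup_{η ∈ (0,1)} (UB(η) - LB(η))`. -/
noncomputable def Delta (th σt fh σf : ℝ) : ℝ :=
  sSup {d : ℝ | ∃ η ∈ Ioo (0:ℝ) 1, d = UB th σt fh σf η - LB th σt fh σf η}

lemma keyG (x y u v : ℝ) (hu : 0 < u) (hux : u < x) (hv : 0 < v) (hvy : v < y)
    (h : v * x ≤ u * y) :
    0 ≤ u * x^2 + u * y^2 - u * (u - v)^2 - 2 * x^2 * v := by
  have hc : 0 ≤ u * y - v * x := by linarith
  have hp : 0 < x - u := by linarith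
  rcases le_total v u with huv | huv <;> rcases le_total (x - u) (y - v) with hpq | hpq
  · nlinarith [mul_nonneg (mul_nonneg hu.le (by linarith : (0:ℝ) ≤ (y - v) - (x - u))) (by linarith : (0:ℝ) ≤ x - u + v),
      mul_nonneg (mul_nonneg (by linarith : (0:ℝ) < x).le hp.le) (by linarith : (0:ℝ) ≤ u - v),
      mul_nonneg hu.le (sq_nonneg ((y - v) - (x - u)))]
  · nlinarith [mul_nonneg (by linarith : (0:ℝ) ≤ x) hc,
      mul_nonneg (mul_nonneg hu.le (by linarith : (0:ℝ) ≤ u - v)) (by linarith : (0:ℝ) ≤ (x - u) - (y - v)),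
      mul_nonneg hu.le (sq_nonneg ((x - u) - (y - v)))]
  · nlinarith [mul_nonneg (by linarith : (0:ℝ) ≤ x) hc,
      mul_nonneg (mul_nonneg hu.le (by linarith : (0:ℝ) ≤ v - u)) (by linarith : (0:ℝ) ≤ (y - v) - (x - u)),
      mul_nonneg hu.le (sq_nonneg ((x - u) - (y - v)))]
  · nlinarith [mul_nonneg hc (by linarith : (0:ℝ) ≤ (x - u) - (y - v)),
      mul_nonneg (mul_nonneg (by linarith : (0:ℝ) ≤ v - u) hp.le) (by linarith : (0:ℝ) ≤ (x - u) - (y - v)),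
      mul_nonneg (by linarith : (0:ℝ) ≤ x) hc,
      mul_nonneg hu.le (sq_nonneg ((x - u) - (y - v))),
      mul_nonneg (mul_nonneg (by linarith : (0:ℝ) ≤ v - u) hp.le) (by linarith : (0:ℝ) ≤ x)]

lemma prec_mono (η t1 f1 t2 f2 : ℝ) (hη0 : 0 < η) (hη1 : η < 1)
    (ht1 : 0 < t1) (ht : t1 ≤ t2) (hf2 : 0 < f2) (hf : f2 ≤ f1) :
    Prec η t1 f1 ≤ Prec η t2 f2 := by
  have hb : 0 < 1 - η := by linarith
  have ht2 : 0 < t2 := lt_of_lt_of_le ht1 ht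
  have hf1 : 0 < f1 := lt_of_lt_of_le hf2 hf
  have hd1 : 0 < η * t1 + (1 - η) * f1 := by positivity
  have hd2 : 0 < η * t2 + (1 - η) * f2 := by positivity
  unfold Prec
  rw [div_le_div_iff₀ hd1 hd2]
  have h1 : t1 * f2 ≤ t2 * f1 := mul_le_mul ht hf hf2.le ht2.le
  nlinarith [mul_pos hη0 hb, mul_le_mul_of_nonneg_left h1 (mul_pos hη0 hb).le]

lemma key_diff (th fh σt σf η : ℝ) (hσt : 0 < σt) (hth : σt < th) (hσf : 0 < σf)
    (hfh : σf < fh) (hη0 : 0 < η) (hη1 : η < 1) :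
    Prec η (th + σt) (fh - σf) - Prec η (th - σt) (fh + σf) ≤ max (σt / th) (σf / fh) := by
  have hb : 0 < 1 - η := by linarith
  have hD1 : 0 < η * (th + σt) + (1 - η) * (fh - σf) :=
    add_pos (mul_pos hη0 (by linarith)) (mul_pos hb (by linarith))
  have hD2 : 0 < η * (th - σt) + (1 - η) * (fh + σf) :=
    add_pos (mul_pos hη0 (by linarith)) (mul_pos hb (by linarith))
  have hth0 : 0 < th := by linarith
  have hfh0 : 0 < fh := by linarith
  unfold Prec
  rw [div_sub_div _ _ hD1.ne' hD2.ne', div_le_iff₀ (mul_pos hD1 hD2)]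
  rcases le_total (σf / fh) (σt / th) with hle | hle
  · rw [max_eq_left hle]
    have hvx : (1 - η) * σf * (η * th) ≤ η * σt * ((1 - η) * fh) := by
      rw [div_le_div_iff₀ hfh0 hth0] at hle
      nlinarith [mul_pos hη0 hb]
    have hG := keyG (η * th) ((1 - η) * fh) (η * σt) ((1 - η) * σf)
      (by positivity) (by nlinarith) (by positivity) (by nlinarith) hvx
    rw [div_mul_eq_mul_div, le_div_iff₀ hth0]
    nlinarith [hG, hη0]
  · rw [max_eq_right hle]
    have hvx : η * σt * ((1 - η) * fh) ≤ (1 - η) * σf * (η * th) := by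
      rw [div_le_div_iff₀ hth0 hfh0] at hle
      nlinarith [mul_pos hη0 hb]
    have hG := keyG ((1 - η) * fh) (η * th) ((1 - η) * σf) (η * σt)
      (by positivity) (by nlinarith) (by positivity) (by nlinarith) hvx
    rw [div_mul_eq_mul_div, le_div_iff₀ hfh0]
    nlinarith [hG, hb]

/-- `Δ ≤ max{σ_t/t̂, σ_f/f̂}`. -/
theorem delta_le_max_cv (th fh σt σf : ℝ)
    (hσt : 0 < σt) (hth : σt < th) (hσf : 0 < σf) (hfh : σf < fh) :
    Delta th σt fh σf ≤ max (σt / th) (σf / fh) := by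
  have hth0 : 0 < th := by linarith
  have hfh0 : 0 < fh := by linarith
  have hM : 0 ≤ max (σt / th) (σf / fh) :=
    le_max_of_le_left (by positivity)
  apply Real.sSup_le _ hM
  rintro d ⟨η, ⟨hη0, hη1⟩, rfl⟩
  have hb : 0 < 1 - η := by linarith
  -- UB bound
  have hUB : UB th σt fh σf η ≤ Prec η (th + σt) (fh - σf) := by
    apply Real.sSup_le
    · rintro p ⟨t, ⟨ht1, ht2⟩, f, ⟨hf1, hf2⟩, rfl⟩
      exact prec_mono η t f (th + σt) (fh - σf) hη0 hη1 (by linarith) ht2.le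
        (by linarith) hf1.le
    · have h1 : 0 < η * (th + σt) := by positivity
      have h2 : 0 < η * (th + σt) + (1 - η) * (fh - σf) :=
        add_pos h1 (mul_pos hb (by linarith))
      unfold Prec
      positivity
  -- LB bound
  have hLB : Prec η (th - σt) (fh + σf) ≤ LB th σt fh σf η := by
    have hne : {p : ℝ | ∃ t ∈ Ioo (th - σt) (th + σt), ∃ f ∈ Ioo (fh - σf) (fh + σf),
        p = Prec η t f}.Nonempty :=
      ⟨Prec η th fh, th, ⟨by linarith, by linarith⟩, fh, ⟨by linarith, by linarith⟩, rfl⟩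
    apply le_csInf hne
    rintro p ⟨t, ⟨ht1, ht2⟩, f, ⟨hf1, hf2⟩, rfl⟩
    exact prec_mono η (th - σt) (fh + σf) t f hη0 hη1 (by linarith) ht1.le
      (by linarith) hf2.le
  have := key_diff th fh σt σf η hσt hth hσf hfh hη0 hη1
  linarith
end

section
/- Let t̂, f̂, σ_t, σ_f be real numbers with 0 < σ_t < t̂ and 0 < σ_f < f̂, and let Δ = sup_{η ∈ (0,1)} (UB(η) − LB(η)) be the maximal uncertainty. Then Δ = max{σ_t/t̂, σ_f/f̂} if and only if σ_t/t̂ = σ_f/f̂. -/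
open Set

open Filter Topology

/-- Monotonicity of precision. -/
lemma prec_le_prec (η t f a b : ℝ) (hη0 : 0 < η) (hη1 : η < 1)
    (ht : 0 < t) (hta : t ≤ a) (hb : 0 < b) (hbf : b ≤ f) :
    Prec η t f ≤ Prec η a b := by
  have h1 : 0 < η * t + (1 - η) * f := by nlinarith
  have h2 : 0 < η * a + (1 - η) * b := by nlinarith
  rw [Prec, Prec, div_le_div_iff₀ h1 h2]
  nlinarith [mul_pos hη0 (by linarith : (0:ℝ) < 1 - η),
    mul_le_mul hta hbf hb.le (le_trans ht.le hta)]

lemma UB_eq (th σt fh σf η : ℝ)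
    (hσt : 0 < σt) (hth : σt < th) (hσf : 0 < σf) (hfh : σf < fh)
    (hη0 : 0 < η) (hη1 : η < 1) :
    UB th σt fh σf η = Prec η (th + σt) (fh - σf) := by
  set a := th + σt with ha
  set b := fh - σf with hb
  have hb0 : 0 < b := by simp [hb]; linarith
  have hden : η * a + (1 - η) * b ≠ 0 := by
    have : 0 < η * a + (1 - η) * b := by nlinarith
    exact this.ne'
  apply csSup_eq_of_forall_le_of_forall_lt_exists_gt
  · exact ⟨Prec η th fh, th, ⟨by linarith, by linarith⟩, fh, ⟨by linarith, by linarith⟩, rfl⟩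
  · rintro p ⟨t, ⟨ht1, ht2⟩, f, ⟨hf1, hf2⟩, rfl⟩
    exact prec_le_prec η t f a b hη0 hη1 (by linarith) ht2.le hb0 hf1.le
  · intro w hw
    have hc : ContinuousAt (fun δ : ℝ => Prec η (a - δ) (b + δ)) 0 := by
      simp only [Prec]
      exact ContinuousAt.div (by fun_prop) (by fun_prop) (by simpa using hden)
    have ht : Tendsto (fun δ : ℝ => Prec η (a - δ) (b + δ)) (𝓝[>] (0:ℝ))
        (𝓝 (Prec η a b)) := by
      have h : Tendsto (fun δ : ℝ => Prec η (a - δ) (b + δ)) (𝓝[>] (0:ℝ))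
          (𝓝 (Prec η (a - 0) (b + 0))) := hc.continuousWithinAt
      simpa using h
    have h1 : ∀ᶠ δ in 𝓝[>] (0:ℝ), w < Prec η (a - δ) (b + δ) :=
      ht.eventually (eventually_gt_nhds hw)
    have h2 : ∀ᶠ δ in 𝓝[>] (0:ℝ), δ ∈ Ioo (0:ℝ) (min σt σf) :=
      Ioo_mem_nhdsGT_of_mem ⟨le_refl 0, lt_min hσt hσf⟩
    obtain ⟨δ, hδw, hδ0, hδm⟩ := (h1.and h2).exists
    have hδt : δ < σt := lt_of_lt_of_le hδm (min_le_left _ _)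
    have hδf : δ < σf := lt_of_lt_of_le hδm (min_le_right _ _)
    exact ⟨Prec η (a - δ) (b + δ),
      ⟨a - δ, ⟨by simp [ha]; linarith, by simp [ha]; linarith⟩,
       b + δ, ⟨by simp [hb]; linarith, by simp [hb]; linarith⟩, rfl⟩, hδw⟩

lemma LB_eq (th σt fh σf η : ℝ)
    (hσt : 0 < σt) (hth : σt < th) (hσf : 0 < σf) (hfh : σf < fh)
    (hη0 : 0 < η) (hη1 : η < 1) :
    LB th σt fh σf η = Prec η (th - σt) (fh + σf) := by
  set c := th - σt with hc'
  set d := fh + σf with hd'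
  have hc0 : 0 < c := by simp [hc']; linarith
  have hden : η * c + (1 - η) * d ≠ 0 := by
    have : 0 < η * c + (1 - η) * d := by nlinarith
    exact this.ne'
  apply csInf_eq_of_forall_ge_of_forall_gt_exists_lt
  · exact ⟨Prec η th fh, th, ⟨by linarith, by linarith⟩, fh, ⟨by linarith, by linarith⟩, rfl⟩
  · rintro p ⟨t, ⟨ht1, ht2⟩, f, ⟨hf1, hf2⟩, rfl⟩
    exact prec_le_prec η c d t f hη0 hη1 hc0 ht1.le (by linarith) hf2.le
  · intro w hw
    have hcc : ContinuousAt (fun δ : ℝ => Prec η (c + δ) (d - δ)) 0 := by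
      simp only [Prec]
      exact ContinuousAt.div (by fun_prop) (by fun_prop) (by simpa using hden)
    have ht : Tendsto (fun δ : ℝ => Prec η (c + δ) (d - δ)) (𝓝[>] (0:ℝ))
        (𝓝 (Prec η c d)) := by
      have h : Tendsto (fun δ : ℝ => Prec η (c + δ) (d - δ)) (𝓝[>] (0:ℝ))
          (𝓝 (Prec η (c + 0) (d - 0))) := hcc.continuousWithinAt
      simpa using h
    have h1 : ∀ᶠ δ in 𝓝[>] (0:ℝ), Prec η (c + δ) (d - δ) < w :=
      ht.eventually (eventually_lt_nhds hw)
    have h2 : ∀ᶠ δ in 𝓝[>] (0:ℝ), δ ∈ Ioo (0:ℝ) (min σt σf) :=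
      Ioo_mem_nhdsGT_of_mem ⟨le_refl 0, lt_min hσt hσf⟩
    obtain ⟨δ, hδw, hδ0, hδm⟩ := (h1.and h2).exists
    have hδt : δ < σt := lt_of_lt_of_le hδm (min_le_left _ _)
    have hδf : δ < σf := lt_of_lt_of_le hδm (min_le_right _ _)
    exact ⟨Prec η (c + δ) (d - δ),
      ⟨c + δ, ⟨by simp [hc']; linarith, by simp [hc']; linarith⟩,
       d - δ, ⟨by simp [hd']; linarith, by simp [hd']; linarith⟩, rfl⟩, hδw⟩

/-- The core algebraic inequality. -/
lemma key_le (a b c d x y P Q M N : ℝ)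
    (hb : 0 < b) (hc : 0 < c) (hca : c < a) (hbd : b < d)
    (hx : 0 < x) (hy : 0 < y)
    (hP2 : P ^ 2 = a * d) (hQ2 : Q ^ 2 = b * c) (hM2 : M ^ 2 = a * c)
    (hN2 : N ^ 2 = b * d) (hPQ : P * Q = M * N)
    (hP0 : 0 < P) (hQ0 : 0 < Q) (hQP : Q ≤ P) :
    x * a / (x * a + y * b) - x * c / (x * c + y * d) ≤ (P - Q) / (P + Q) := by
  have hD1 : 0 < x * a + y * b := by nlinarith
  have hD2 : 0 < x * c + y * d := by nlinarith
  have hPQ0 : 0 < P + Q := by linarith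
  rw [div_sub_div _ _ hD1.ne' hD2.ne', div_le_div_iff₀ (mul_pos hD1 hD2) hPQ0]
  have key : (P - Q) * ((x * a + y * b) * (x * c + y * d)) -
      (x * a * (x * c + y * d) - x * c * (x * a + y * b)) * (P + Q)
      = (P - Q) * (x * M - y * N) ^ 2 := by
    linear_combination (-(P - Q) * x ^ 2) * hM2 + (-(P - Q) * y ^ 2) * hN2 +
      (2 * x * y * Q) * hP2 + (-2 * x * y * P) * hQ2 + (-2 * x * y * (P - Q)) * hPQ
  nlinarith [mul_nonneg (sub_nonneg.2 hQP) (sq_nonneg (x * M - y * N)), key]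

/-- Equality at the optimal prevalence. -/
lemma key_eq (a b c d P Q M N : ℝ)
    (hb : 0 < b) (hc : 0 < c) (hca : c < a) (hbd : b < d)
    (hP2 : P ^ 2 = a * d) (hQ2 : Q ^ 2 = b * c) (hM2 : M ^ 2 = a * c)
    (hN2 : N ^ 2 = b * d) (hPQ : P * Q = M * N)
    (hM0 : 0 < M) (hN0 : 0 < N) (hP0 : 0 < P) (hQ0 : 0 < Q) :
    N * a / (N * a + M * b) - N * c / (N * c + M * d) = (P - Q) / (P + Q) := by
  have ha : 0 < a := lt_trans hc hca
  have hd : 0 < d := lt_trans hb hbd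
  have hD1 : 0 < N * a + M * b := by positivity
  have hD2 : 0 < N * c + M * d := by positivity
  have hPQ0 : 0 < P + Q := by linarith
  rw [div_sub_div _ _ hD1.ne' hD2.ne', div_eq_div_iff (mul_pos hD1 hD2).ne' hPQ0.ne']
  linear_combination ((P - Q) * N ^ 2) * hM2 + ((P - Q) * M ^ 2) * hN2 +
    (-2 * N * M * Q) * hP2 + (2 * N * M * P) * hQ2 + (2 * N * M * (P - Q)) * hPQ

lemma prec_scale (x y t f : ℝ) (hx : 0 < x) (hy : 0 < y) (ht : 0 < t) (hf : 0 < f) :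
    Prec (x / (x + y)) t f = x * t / (x * t + y * f) := by
  have hxy : (0:ℝ) < x + y := by linarith
  have hden : 0 < x * t + y * f := by positivity
  have h1 : 1 - x / (x + y) = y / (x + y) := by field_simp; ring
  rw [Prec, h1]
  rw [div_mul_eq_mul_div, div_mul_eq_mul_div, ← add_div]
  rw [div_div_div_cancel_right₀ hxy.ne']

/-- Closed form for Delta. -/
lemma Delta_eq (th fh σt σf : ℝ)
    (hσt : 0 < σt) (hth : σt < th) (hσf : 0 < σf) (hfh : σf < fh) :
    Delta th σt fh σf =
      (Real.sqrt ((th + σt) * (fh + σf)) - Real.sqrt ((fh - σf) * (th - σt))) /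
      (Real.sqrt ((th + σt) * (fh + σf)) + Real.sqrt ((fh - σf) * (th - σt))) := by
  set a := th + σt with ha'
  set b := fh - σf with hb'
  set c := th - σt with hc'
  set d := fh + σf with hd'
  have ha : 0 < a := by simp only [ha']; linarith
  have hb : 0 < b := by simp only [hb']; linarith
  have hc : 0 < c := by simp only [hc']; linarith
  have hd : 0 < d := by simp only [hd']; linarith
  have hca : c < a := by simp only [ha', hc']; linarith
  have hbd : b < d := by simp only [hb', hd']; linarith
  set P := Real.sqrt (a * d) with hP'
  set Q := Real.sqrt (b * c) with hQ'
  set M := Real.sqrt (a * c) with hM'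
  set N := Real.sqrt (b * d) with hN'
  have hP2 : P ^ 2 = a * d := Real.sq_sqrt (by positivity)
  have hQ2 : Q ^ 2 = b * c := Real.sq_sqrt (by positivity)
  have hM2 : M ^ 2 = a * c := Real.sq_sqrt (by positivity)
  have hN2 : N ^ 2 = b * d := Real.sq_sqrt (by positivity)
  have hP0 : 0 < P := Real.sqrt_pos.2 (by positivity)
  have hQ0 : 0 < Q := Real.sqrt_pos.2 (by positivity)
  have hM0 : 0 < M := Real.sqrt_pos.2 (by positivity)
  have hN0 : 0 < N := Real.sqrt_pos.2 (by positivity)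
  have hPQ : P * Q = M * N := by
    rw [hP', hQ', hM', hN', ← Real.sqrt_mul (by positivity), ← Real.sqrt_mul (by positivity)]
    ring_nf
  have hQP : Q < P := by
    apply Real.sqrt_lt_sqrt (by positivity)
    nlinarith
  have hIsG : IsGreatest
      {d' : ℝ | ∃ η ∈ Ioo (0:ℝ) 1, d' = UB th σt fh σf η - LB th σt fh σf η}
      ((P - Q) / (P + Q)) := by
    constructor
    · have hMN : (0:ℝ) < N + M := by linarith
      refine ⟨N / (N + M), ⟨by positivity, by rw [div_lt_one hMN]; linarith⟩, ?_⟩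
      have hη0 : (0:ℝ) < N / (N + M) := by positivity
      have hη1 : N / (N + M) < 1 := by rw [div_lt_one hMN]; linarith
      rw [UB_eq th σt fh σf _ hσt hth hσf hfh hη0 hη1,
          LB_eq th σt fh σf _ hσt hth hσf hfh hη0 hη1]
      rw [show th + σt = a from rfl, show fh - σf = b from rfl,
          show th - σt = c from rfl, show fh + σf = d from rfl]
      rw [prec_scale N M a b hN0 hM0 ha hb, prec_scale N M c d hN0 hM0 hc hd]
      exact (key_eq a b c d P Q M N hb hc hca hbd hP2 hQ2 hM2 hN2 hPQ hM0 hN0 hP0 hQ0).symm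
    · rintro p ⟨η, ⟨hη0, hη1⟩, rfl⟩
      rw [UB_eq th σt fh σf _ hσt hth hσf hfh hη0 hη1,
          LB_eq th σt fh σf _ hσt hth hσf hfh hη0 hη1]
      have := key_le a b c d η (1 - η) P Q M N hb hc hca hbd hη0 (by linarith)
        hP2 hQ2 hM2 hN2 hPQ hP0 hQ0 hQP.le
      simpa [Prec] using this
  exact hIsG.csSup_eq

/-- `Δ = max{σ_t/t̂, σ_f/f̂}` iff `σ_t/t̂ = σ_f/f̂`. -/
theorem delta_eq_max_cv_iff (th fh σt σf : ℝ)
    (hσt : 0 < σt) (hth : σt < th) (hσf : 0 < σf) (hfh : σf < fh) :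
    Delta th σt fh σf = max (σt / th) (σf / fh) ↔ σt / th = σf / fh := by
  have hth0 : (0:ℝ) < th := lt_trans hσt hth
  have hfh0 : (0:ℝ) < fh := lt_trans hσf hfh
  set P := Real.sqrt ((th + σt) * (fh + σf)) with hP'
  set Q := Real.sqrt ((fh - σf) * (th - σt)) with hQ'
  have hP2 : P ^ 2 = (th + σt) * (fh + σf) := Real.sq_sqrt (by nlinarith)
  have hQ2 : Q ^ 2 = (fh - σf) * (th - σt) := Real.sq_sqrt (by nlinarith)
  have hP0 : 0 < P := Real.sqrt_pos.2 (by nlinarith)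
  have hQ0 : 0 < Q := Real.sqrt_pos.2 (by nlinarith)
  have hQP : Q < P := by
    apply Real.sqrt_lt_sqrt (by nlinarith)
    nlinarith
  have hPQ0 : 0 < P + Q := by linarith
  have hD : Delta th σt fh σf = (P - Q) / (P + Q) :=
    Delta_eq th fh σt σf hσt hth hσf hfh
  rw [hD]
  constructor
  · intro h
    by_contra hne
    rcases lt_or_gt_of_ne hne with huv | huv
    · -- σt/th < σf/fh : show (P-Q)/(P+Q) < σf/fh, contradiction
      have hcross : σt * fh < σf * th := by
        have := (div_lt_div_iff₀ hth0 hfh0).1 huv; linarith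
      have hmax : max (σt / th) (σf / fh) = σf / fh := max_eq_right huv.le
      have hsq : (P * (fh - σf)) ^ 2 < (Q * (fh + σf)) ^ 2 := by
        have e1 : (P * (fh - σf)) ^ 2 = P ^ 2 * (fh - σf) ^ 2 := by ring
        have e2 : (Q * (fh + σf)) ^ 2 = Q ^ 2 * (fh + σf) ^ 2 := by ring
        rw [e1, e2, hP2, hQ2]
        nlinarith [mul_pos (show (0:ℝ) < fh + σf by linarith)
          (show (0:ℝ) < fh - σf by linarith)]
      have hlt : P * (fh - σf) < Q * (fh + σf) :=
        lt_of_pow_lt_pow_left₀ 2 (by positivity) hsq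
      have : (P - Q) / (P + Q) < σf / fh := by
        rw [div_lt_div_iff₀ hPQ0 hfh0]
        nlinarith
      rw [h, hmax] at this
      exact lt_irrefl _ this
    · have hcross : σf * th < σt * fh := by
        have := (div_lt_div_iff₀ hfh0 hth0).1 huv; linarith
      have hmax : max (σt / th) (σf / fh) = σt / th := max_eq_left huv.le
      have hsq : (P * (th - σt)) ^ 2 < (Q * (th + σt)) ^ 2 := by
        have e1 : (P * (th - σt)) ^ 2 = P ^ 2 * (th - σt) ^ 2 := by ring
        have e2 : (Q * (th + σt)) ^ 2 = Q ^ 2 * (th + σt) ^ 2 := by ring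
        rw [e1, e2, hP2, hQ2]
        nlinarith [mul_pos (show (0:ℝ) < th + σt by linarith)
          (show (0:ℝ) < th - σt by linarith)]
      have hlt : P * (th - σt) < Q * (th + σt) :=
        lt_of_pow_lt_pow_left₀ 2 (by positivity) hsq
      have : (P - Q) / (P + Q) < σt / th := by
        rw [div_lt_div_iff₀ hPQ0 hth0]
        nlinarith
      rw [h, hmax] at this
      exact lt_irrefl _ this
  · intro h
    have hcross : σt * fh = σf * th := by
      rw [div_eq_div_iff hth0.ne' hfh0.ne'] at h; linarith
    have hsq : (P * (th - σt)) ^ 2 = (Q * (th + σt)) ^ 2 := by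
      have e1 : (P * (th - σt)) ^ 2 = P ^ 2 * (th - σt) ^ 2 := by ring
      have e2 : (Q * (th + σt)) ^ 2 = Q ^ 2 * (th + σt) ^ 2 := by ring
      rw [e1, e2, hP2, hQ2]
      linear_combination (2 * (σt ^ 2 - th ^ 2)) * hcross
    have hAB : P * (th - σt) = Q * (th + σt) := by
      have h0 : (P * (th - σt) - Q * (th + σt)) * (P * (th - σt) + Q * (th + σt)) = 0 := by
        linear_combination hsq
      rcases mul_eq_zero.1 h0 with h1 | h1
      · linarith
      · exfalso
        have : 0 < P * (th - σt) + Q * (th + σt) := by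
          nlinarith [mul_pos hP0 (show (0:ℝ) < th - σt by linarith),
            mul_pos hQ0 (show (0:ℝ) < th + σt by linarith)]
        linarith
    have hval : (P - Q) / (P + Q) = σt / th := by
      rw [div_eq_div_iff hPQ0.ne' hth0.ne']
      linear_combination hAB
    rw [hval, ← h, max_self]
end

section
/- Let r₁, r₂ be reals with 0 < r₁ < r₂, and define f : (0,∞) → ℝ by f(x) = 1/(1 + x·r₁) − 1/(1 + x·r₂). Then f attains its maximum over (0,∞) at the unique point x* = 1/√(r₁·r₂); that is, f(x) ≤ f(x*) for all x > 0, with equality only at x = x*. -/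
lemma nid (r₁ r₂ s x : ℝ) (hss : s * s = r₁ * r₂) :
    s*((1+x*r₁)*(1+x*r₂)) - x*((s+r₁)*(s+r₂)) = s*(x*s - 1)^2 := by
  linear_combination (x - s*x^2) * hss

lemma key (r₁ r₂ s x : ℝ) (hr₁ : 0 < r₁) (h12 : r₁ < r₂) (hs : 0 < s)
    (hss : s * s = r₁ * r₂) (hx : 0 < x) :
    1/(1+x*r₁) - 1/(1+x*r₂) ≤ 1/(1+(1/s)*r₁) - 1/(1+(1/s)*r₂) ∧
    (1/(1+x*r₁) - 1/(1+x*r₂) = 1/(1+(1/s)*r₁) - 1/(1+(1/s)*r₂) → x = 1/s) := by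
  have hr₂ : 0 < r₂ := hr₁.trans h12
  have d1 : (0:ℝ) < 1 + x * r₁ := by positivity
  have d2 : (0:ℝ) < 1 + x * r₂ := by positivity
  have e1 : 1 + (1/s) * r₁ = (s + r₁)/s := by field_simp
  have e2 : 1 + (1/s) * r₂ = (s + r₂)/s := by field_simp
  have d3 : (0:ℝ) < s + r₁ := by positivity
  have d4 : (0:ℝ) < s + r₂ := by positivity
  have hL : 1/(1+x*r₁) - 1/(1+x*r₂) = x*(r₂-r₁) / ((1+x*r₁)*(1+x*r₂)) := by
    field_simp; ring
  have hR : 1/(1+(1/s)*r₁) - 1/(1+(1/s)*r₂) = s*(r₂-r₁) / ((s+r₁)*(s+r₂)) := by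
    rw [e1, e2, one_div_div, one_div_div]
    field_simp; ring
  have hnid := nid r₁ r₂ s x hss
  constructor
  · rw [hL, hR, div_le_div_iff₀ (by positivity) (by positivity)]
    nlinarith [mul_nonneg (mul_nonneg (sub_pos.2 h12).le hs.le) (sq_nonneg (x*s - 1)), hnid]
  · intro heq
    rw [hL, hR] at heq
    rw [div_eq_div_iff (by positivity) (by positivity)] at heq
    have h0 : ((r₂-r₁)*s)*(x*s-1)^2 = 0 := by
      linear_combination (-(r₂-r₁))*hnid - heq
    have hpos : (0:ℝ) < (r₂-r₁)*s := mul_pos (sub_pos.2 h12) hs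
    rcases mul_eq_zero.mp h0 with h | h
    · exact absurd h hpos.ne'
    · have hxs : x*s = 1 := by
        have := pow_eq_zero_iff (n := 2) (by norm_num) |>.mp h
        linarith
      field_simp
      linarith

/-- `f(x) = 1/(1 + x r₁) - 1/(1 + x r₂)` attains its maximum over `(0, ∞)`
at the unique point `x* = 1/√(r₁ r₂)`. -/
theorem bandwidth_max_at (r₁ r₂ : ℝ) (hr₁ : 0 < r₁) (hr₁₂ : r₁ < r₂)
    (f : ℝ → ℝ) (hf : ∀ x, f x = 1 / (1 + x * r₁) - 1 / (1 + x * r₂)) :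
    (∀ x : ℝ, 0 < x → f x ≤ f (1 / Real.sqrt (r₁ * r₂))) ∧
    (∀ x : ℝ, 0 < x → f x = f (1 / Real.sqrt (r₁ * r₂)) → x = 1 / Real.sqrt (r₁ * r₂)) := by
  have hr₂ : 0 < r₂ := hr₁.trans hr₁₂
  set s := Real.sqrt (r₁ * r₂) with hsdef
  have hs : 0 < s := Real.sqrt_pos.mpr (by positivity)
  have hss : s * s = r₁ * r₂ := Real.mul_self_sqrt (by positivity)
  constructor
  · intro x hx
    rw [hf, hf]
    exact (key r₁ r₂ s x hr₁ hr₁₂ hs hss hx).1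
  · intro x hx heq
    rw [hf, hf] at heq
    exact (key r₁ r₂ s x hr₁ hr₁₂ hs hss hx).2 heq
end

section
/- Let r₁, r₂ be reals with 0 < r₁ < r₂, and define f : (0,∞) → ℝ by f(x) = 1/(1 + x·r₁) − 1/(1 + x·r₂). Then the supremum of f over (0,∞) equals (1 − √(r₁/r₂)) / (1 + √(r₁/r₂)), attained at x* = 1/√(r₁·r₂). -/
/-- the supremum of `f(x) = 1/(1 + x r₁) - 1/(1 + x r₂)` over `(0, ∞)`
equals `(1 - √(r₁/r₂)) / (1 + √(r₁/r₂))`, attained at `x* = 1/√(r₁ r₂)`. -/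
theorem bandwidth_sup_eq (r₁ r₂ : ℝ) (hr₁ : 0 < r₁) (hr₁₂ : r₁ < r₂)
    (f : ℝ → ℝ) (hf : ∀ x, f x = 1 / (1 + x * r₁) - 1 / (1 + x * r₂)) :
    sSup {y : ℝ | ∃ x : ℝ, 0 < x ∧ y = f x} =
        (1 - Real.sqrt (r₁ / r₂)) / (1 + Real.sqrt (r₁ / r₂)) ∧
    f (1 / Real.sqrt (r₁ * r₂)) =
        (1 - Real.sqrt (r₁ / r₂)) / (1 + Real.sqrt (r₁ / r₂)) := by
  have hr₂ : 0 < r₂ := hr₁.trans hr₁₂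
  set a := Real.sqrt r₁ with ha_def
  set b := Real.sqrt r₂ with hb_def
  have ha : 0 < a := Real.sqrt_pos.mpr hr₁
  have hb : 0 < b := Real.sqrt_pos.mpr hr₂
  have ha2 : a ^ 2 = r₁ := Real.sq_sqrt hr₁.le
  have hb2 : b ^ 2 = r₂ := Real.sq_sqrt hr₂.le
  have hab : a < b := Real.sqrt_lt_sqrt hr₁.le hr₁₂
  have hq : Real.sqrt (r₁ / r₂) = a / b := Real.sqrt_div hr₁.le r₂
  have hm : Real.sqrt (r₁ * r₂) = a * b := Real.sqrt_mul hr₁.le r₂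
  have hM : (1 - Real.sqrt (r₁ / r₂)) / (1 + Real.sqrt (r₁ / r₂)) = (b - a) / (b + a) := by
    rw [hq]
    have h1 : (0:ℝ) < 1 + a / b := by positivity
    field_simp
  have hfx : f (1 / Real.sqrt (r₁ * r₂)) = (b - a) / (b + a) := by
    rw [hm, hf, ← ha2, ← hb2]
    have hab0 : (0:ℝ) < a * b := by positivity
    have h1 : (0:ℝ) < 1 + 1 / (a * b) * a ^ 2 := by positivity
    have h2 : (0:ℝ) < 1 + 1 / (a * b) * b ^ 2 := by positivity
    field_simp
    ring
  refine ⟨?_, hfx.trans hM.symm⟩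
  rw [hM]
  apply IsGreatest.csSup_eq
  constructor
  · exact ⟨1 / Real.sqrt (r₁ * r₂), by rw [hm]; positivity, hfx.symm⟩
  · rintro y ⟨x, hx, rfl⟩
    rw [hf, ← ha2, ← hb2]
    have h1 : (0:ℝ) < 1 + x * a ^ 2 := by positivity
    have h2 : (0:ℝ) < 1 + x * b ^ 2 := by positivity
    rw [div_sub_div _ _ h1.ne' h2.ne', div_le_div_iff₀ (by positivity) (by positivity)]
    nlinarith [mul_nonneg (sub_nonneg.mpr hab.le) (sq_nonneg (x * a * b - 1)),
      mul_pos ha hb, sq_nonneg (a - b), mul_pos hx (mul_pos ha hb)]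
end

section
/- Let (Ω, 𝒜, P) be a probability space and let X, Y : Ω → ℝ be independent random variables. Let t̂, f̂, σ_t, σ_f be reals with 0 < σ_t < t̂ and 0 < σ_f < f̂, let α ∈ (0,1), and suppose P(X ∈ (t̂ − σ_t, t̂ + σ_t)) ≥ α and P(Y ∈ (f̂ − σ_f, f̂ + σ_f)) ≥ α. Set Δ = max{σ_t/t̂, σ_f/f̂}. Then for every η ∈ (0,1), P(|Prec(η, X, Y) − Prec(η, t̂, f̂)| ≤ Δ) ≥ α². -/
open MeasureTheory

-- upper side numerator bound, case σf*th ≤ σt*fh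
lemma numU (η t f th fh σt σf : ℝ) (hη : 0 < η) (hη1 : η < 1)
    (hσt : 0 < σt) (hth : σt < th) (hσf : 0 < σf) (hfh : σf < fh)
    (ht1 : th - σt ≤ t) (ht2 : t ≤ th + σt)
    (hf1 : fh - σf ≤ f) (hf2 : f ≤ fh + σf)
    (hc : σf * th ≤ σt * fh) :
    η * (1 - η) * th * (t * fh - th * f) ≤
      σt * ((η * t + (1 - η) * f) * (η * th + (1 - η) * fh)) := by
  have hη' : 0 < 1 - η := by linarith
  have hthpos : 0 < th := by linarith
  have hfhpos : 0 < fh := by linarith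
  have hDh : 0 < η * th + (1 - η) * fh := by positivity
  have hfred : 0 ≤ ((1 - η) * (σt * (η * th + (1 - η) * fh) + η * th ^ 2)) * (f - (fh - σf)) :=
    mul_nonneg (by positivity) (by linarith)
  rcases le_total ((1 - η) * th * fh) (σt * (η * th + (1 - η) * fh)) with hs | hs
  · -- coef of t ≥ 0 in S; worst corner t = th - σt, f = fh - σf
    have htred : 0 ≤ (η * (σt * (η * th + (1 - η) * fh) - (1 - η) * th * fh)) * (t - (th - σt)) :=
      mul_nonneg (mul_nonneg hη.le (by linarith)) (by linarith)
    -- corner value: σt*Dc*Dh + η(1-η)th(σt*fh - th*σf) ≥ 0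
    have hDc : 0 ≤ η * (th - σt) + (1 - η) * (fh - σf) :=
      add_nonneg (mul_nonneg hη.le (by linarith)) (mul_nonneg hη'.le (by linarith))
    nlinarith [mul_nonneg (mul_nonneg hσt.le hDc) hDh.le,
      mul_nonneg (mul_nonneg (mul_nonneg hη.le hη'.le) hthpos.le) (by linarith : (0:ℝ) ≤ σt * fh - σf * th),
      hfred, htred]
  · -- coef of t ≤ 0; worst corner t = th + σt, f = fh - σf
    have htred : 0 ≤ (η * ((1 - η) * th * fh - σt * (η * th + (1 - η) * fh))) * ((th + σt) - t) :=
      mul_nonneg (mul_nonneg hη.le (by linarith)) (by linarith)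
    nlinarith [hfred, htred, hthpos,
      mul_nonneg (mul_nonneg hσt.le (mul_nonneg hη'.le hDh.le)) (by linarith : (0:ℝ) ≤ σt * fh - σf * th),
      mul_nonneg (mul_nonneg (mul_nonneg hη.le hη'.le) (by positivity : (0:ℝ) ≤ th^2)) (by linarith : (0:ℝ) ≤ σt * fh - σf * th),
      mul_nonneg (by positivity : (0:ℝ) ≤ σt * η^2 * th^2) (by linarith : (0:ℝ) ≤ th + σt),
      mul_nonneg (by positivity : (0:ℝ) ≤ σt * (1-η)^2 * fh^2) (by linarith : (0:ℝ) ≤ th - σt)]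

-- lower side numerator bound, case σf*th ≤ σt*fh
lemma numL (η t f th fh σt σf : ℝ) (hη : 0 < η) (hη1 : η < 1)
    (hσt : 0 < σt) (hth : σt < th) (hσf : 0 < σf) (hfh : σf < fh)
    (ht1 : th - σt ≤ t) (ht2 : t ≤ th + σt)
    (hf1 : fh - σf ≤ f) (hf2 : f ≤ fh + σf)
    (hc : σf * th ≤ σt * fh) :
    -(σt * ((η * t + (1 - η) * f) * (η * th + (1 - η) * fh))) ≤
      η * (1 - η) * th * (t * fh - th * f) := by
  have hη' : 0 < 1 - η := by linarith
  have hthpos : 0 < th := by linarith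
  have hfhpos : 0 < fh := by linarith
  have hDh : 0 < η * th + (1 - η) * fh := by positivity
  -- S2 = σt*D*Dh + η(1-η)th(t*fh - th*f); coef_t = η(σt*Dh + (1-η)*th*fh) > 0, so t = th - σt worst
  have htred : 0 ≤ (η * (σt * (η * th + (1 - η) * fh) + (1 - η) * th * fh)) * (t - (th - σt)) :=
    mul_nonneg (by positivity) (by linarith)
  rcases le_total (η * th ^ 2) (σt * (η * th + (1 - η) * fh)) with hs | hs
  · -- coef_f = (1-η)(σt*Dh - η*th^2) ≥ 0, worst corner f = fh - σf, then σf → σt*fh/th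
    have hfred : 0 ≤ ((1 - η) * (σt * (η * th + (1 - η) * fh) - η * th ^ 2)) * (f - (fh - σf)) :=
      mul_nonneg (mul_nonneg hη'.le (by linarith)) (by linarith)
    nlinarith [htred, hfred, hthpos,
      mul_nonneg (mul_nonneg hη'.le (by linarith : (0:ℝ) ≤ σt * (η * th + (1 - η) * fh) - η * th ^ 2)) (by linarith : (0:ℝ) ≤ σt * fh - σf * th),
      mul_nonneg (mul_nonneg hσt.le (by linarith : (0:ℝ) ≤ th - σt)) (mul_nonneg hDh.le hDh.le)]
  · -- coef_f ≤ 0, worst corner f = fh + σf, then σf → σt*fh/th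
    have hfred : 0 ≤ ((1 - η) * (η * th ^ 2 - σt * (η * th + (1 - η) * fh))) * ((fh + σf) - f) :=
      mul_nonneg (mul_nonneg hη'.le (by linarith)) (by linarith)
    nlinarith [htred, hfred, hthpos,
      mul_nonneg (mul_nonneg hη'.le (by linarith : (0:ℝ) ≤ η * th ^ 2 - σt * (η * th + (1 - η) * fh))) (by linarith : (0:ℝ) ≤ σt * fh - σf * th),
      mul_nonneg (by positivity : (0:ℝ) ≤ η^2 * th^2 * σt) (by linarith : (0:ℝ) ≤ th - σt),
      mul_nonneg (by positivity : (0:ℝ) ≤ (1-η)^2 * fh^2 * σt) (by linarith : (0:ℝ) ≤ th + σt)]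

-- one-sided key lemma
lemma keyA (η t f th fh σt σf : ℝ) (hη : 0 < η) (hη1 : η < 1)
    (hσt : 0 < σt) (hth : σt < th) (hσf : 0 < σf) (hfh : σf < fh)
    (ht1 : th - σt ≤ t) (ht2 : t ≤ th + σt)
    (hf1 : fh - σf ≤ f) (hf2 : f ≤ fh + σf)
    (hc : σf * th ≤ σt * fh) :
    |Prec η t f - Prec η th fh| ≤ σt / th := by
  have hη' : 0 < 1 - η := by linarith
  have htpos : 0 < t := by linarith
  have hfpos : 0 < f := by linarith
  have hthpos : 0 < th := by linarith
  have hfhpos : 0 < fh := by linarith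
  have hD : 0 < η * t + (1 - η) * f := by positivity
  have hDh : 0 < η * th + (1 - η) * fh := by positivity
  have hdiff : Prec η t f - Prec η th fh =
      (η * (1 - η) * (t * fh - th * f)) /
        ((η * t + (1 - η) * f) * (η * th + (1 - η) * fh)) := by
    unfold Prec
    field_simp
    ring
  rw [hdiff, abs_div, abs_of_pos (mul_pos hD hDh), div_le_div_iff₀ (mul_pos hD hDh) hthpos,
    ← abs_of_pos hthpos, ← abs_mul, abs_le, abs_of_pos hthpos]
  constructor
  · have h := numL η t f th fh σt σf hη hη1 hσt hth hσf hfh ht1 ht2 hf1 hf2 hc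
    nlinarith [h]
  · have h := numU η t f th fh σt σf hη hη1 hσt hth hσf hfh ht1 ht2 hf1 hf2 hc
    nlinarith [h]

lemma prec_swap (η t f : ℝ) (hη : 0 < η) (hη1 : η < 1) (ht : 0 < t) (hf : 0 < f) :
    Prec η t f = 1 - Prec (1 - η) f t := by
  have hη' : 0 < 1 - η := by linarith
  have hD : 0 < η * t + (1 - η) * f := add_pos (mul_pos hη ht) (mul_pos hη' hf)
  have hD' : (1 - η) * f + (1 - (1 - η)) * t ≠ 0 := by
    intro h; apply hD.ne'; linarith [h]
  unfold Prec
  rw [eq_sub_iff_add_eq]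
  rw [div_add_div _ _ hD.ne' hD', div_eq_one_iff_eq (mul_ne_zero hD.ne' hD')]
  ring

lemma key_s14 (η t f th fh σt σf : ℝ) (hη : 0 < η) (hη1 : η < 1)
    (hσt : 0 < σt) (hth : σt < th) (hσf : 0 < σf) (hfh : σf < fh)
    (ht1 : th - σt ≤ t) (ht2 : t ≤ th + σt)
    (hf1 : fh - σf ≤ f) (hf2 : f ≤ fh + σf) :
    |Prec η t f - Prec η th fh| ≤ max (σt / th) (σf / fh) := by
  have hη' : 0 < 1 - η := by linarith
  have htpos : 0 < t := by linarith
  have hfpos : 0 < f := by linarith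
  have hthpos : 0 < th := by linarith
  have hfhpos : 0 < fh := by linarith
  rcases le_total (σf / fh) (σt / th) with hc | hc
  · rw [max_eq_left hc]
    have hc' : σf * th ≤ σt * fh := by
      rw [div_le_div_iff₀ hfhpos hthpos] at hc; linarith
    exact keyA η t f th fh σt σf hη hη1 hσt hth hσf hfh ht1 ht2 hf1 hf2 hc'
  · rw [max_eq_right hc]
    have hc' : σt * fh ≤ σf * th := by
      rw [div_le_div_iff₀ hthpos hfhpos] at hc; linarith
    rw [prec_swap η t f hη hη1 htpos hfpos, prec_swap η th fh hη hη1 hthpos hfhpos]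
    have : 1 - Prec (1 - η) f t - (1 - Prec (1 - η) fh th)
        = -(Prec (1 - η) f t - Prec (1 - η) fh th) := by ring
    rw [this, abs_neg]
    exact keyA (1 - η) f t fh th σf σt hη' (by linarith) hσf hfh hσt hth hf1 hf2 ht1 ht2 hc'


/-- if the estimates of TPR and FPR lie in their confidence intervals
with probability at least `α` each, and the estimating random variables are
independent, then the precision lies within `Δ = max{CV_TPR, CV_FPR}` of its point
estimate with probability at least `α²`. -/
theorem prec_confidence {Ω : Type*} [MeasurableSpace Ω]
    (P : Measure Ω) [IsProbabilityMeasure P]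
    (X Y : Ω → ℝ) (hX : Measurable X) (hY : Measurable Y)
    (hindep : ProbabilityTheory.IndepFun X Y P)
    (th fh σt σf α : ℝ)
    (hσt : 0 < σt) (hth : σt < th) (hσf : 0 < σf) (hfh : σf < fh)
    (hα : α ∈ Set.Ioo (0:ℝ) 1)
    (hXconf : ENNReal.ofReal α ≤ P {ω | X ω ∈ Set.Ioo (th - σt) (th + σt)})
    (hYconf : ENNReal.ofReal α ≤ P {ω | Y ω ∈ Set.Ioo (fh - σf) (fh + σf)}) :
    ∀ η ∈ Set.Ioo (0:ℝ) 1,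
      ENNReal.ofReal (α ^ 2) ≤
        P {ω | |Prec η (X ω) (Y ω) - Prec η th fh| ≤ max (σt / th) (σf / fh)} := by
  intro η hη
  have hsub : X ⁻¹' Set.Ioo (th - σt) (th + σt) ∩ Y ⁻¹' Set.Ioo (fh - σf) (fh + σf) ⊆
      {ω | |Prec η (X ω) (Y ω) - Prec η th fh| ≤ max (σt / th) (σf / fh)} := by
    rintro ω ⟨hx, hy⟩
    exact key_s14 η (X ω) (Y ω) th fh σt σf hη.1 hη.2 hσt hth hσf hfh
      hx.1.le hx.2.le hy.1.le hy.2.le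
  calc ENNReal.ofReal (α ^ 2) = ENNReal.ofReal α * ENNReal.ofReal α := by
        rw [← ENNReal.ofReal_mul hα.1.le, sq]
    _ ≤ P (X ⁻¹' Set.Ioo (th - σt) (th + σt)) * P (Y ⁻¹' Set.Ioo (fh - σf) (fh + σf)) :=
        mul_le_mul' hXconf hYconf
    _ = P (X ⁻¹' Set.Ioo (th - σt) (th + σt) ∩ Y ⁻¹' Set.Ioo (fh - σf) (fh + σf)) :=
        (hindep.measure_inter_preimage_eq_mul _ _ measurableSet_Ioo measurableSet_Ioo).symm
    _ ≤ _ := measure_mono hsub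
end
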